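/- arXiv:1510.03998 — 2 statements merged into one kernel-verified Lean document; each statement's English description precedes it below -/
import Mathlib

section
/- Let G₁, …, G_p (p ≥ 2) be nonempty connected interval graphs and let G = G₁ ⊔ ⋯ ⊔ G_p be their disjoint union. Then ν(G_γ) = max{ν(G₁), …, ν(G_p)} + 1. -/
open Set

/-- An interval representation of a simple graph `G`: each vertex `v` gets a nonempty
closed interval `[l v, r v] ⊆ ℝ`, and two distinct vertices are adjacent iff their
intervals intersect. -/
structure IntervalRep {V : Type*} (G : SimpleGraph V) where
  l : V → ℝ
  r : V → ℝ
  le : ∀ v, l v ≤ r v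
  adj_iff : ∀ u v : V, u ≠ v →
    (G.Adj u v ↔ (Icc (l u) (r u) ∩ Icc (l v) (r v)).Nonempty)

namespace IntervalRep

variable {V : Type*} {G : SimpleGraph V}

/-- The interval of a vertex. -/
def itv (R : IntervalRep G) (v : V) : Set ℝ := Icc (R.l v) (R.r v)

/-- The nesting `ν(R)`: the maximum length of a chain of strictly nested vertex intervals. -/
noncomputable def nesting (R : IntervalRep G) : ℕ :=
  sSup {k : ℕ | ∃ f : Fin k → V, ∀ i j : Fin k, i < j → R.itv (f i) ⊂ R.itv (f j)}

/-- `ν_R(x)`: the maximum length of a chain of strictly nested vertex intervals whose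
outermost interval is `I(x)` (counting `x` itself). -/
noncomputable def nuAt (R : IntervalRep G) (x : V) : ℕ :=
  sSup {k : ℕ | ∃ f : Fin k → V,
    (∀ i j : Fin k, i < j → R.itv (f i) ⊂ R.itv (f j)) ∧
    ∃ h : 0 < k, f ⟨k - 1, by omega⟩ = x}

end IntervalRep

/-- A graph is an interval graph if it admits an interval representation. -/
def IsIntervalGraph {V : Type*} (G : SimpleGraph V) : Prop := Nonempty (IntervalRep G)

/-- The nesting number `ν(G)`: the minimum nesting over all interval representations. -/
noncomputable def nu {V : Type*} (G : SimpleGraph V) : ℕ :=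
  sInf {n : ℕ | ∃ R : IntervalRep G, R.nesting = n}

/-- `G_α`: add vertices `u, a₁, a₂, b₁, b₂` (coded as `0,1,2,3,4`), with `u` adjacent to all
of `G` and to `a₁, b₁`; `a₁ ~ a₂` and `b₁ ~ b₂`. -/
def Galpha {V : Type*} (G : SimpleGraph V) : SimpleGraph (V ⊕ Fin 5) :=
  SimpleGraph.fromRel fun x y =>
    match x, y with
    | Sum.inl a, Sum.inl b => G.Adj a b
    | Sum.inl _, Sum.inr i => i = 0
    | Sum.inr _, Sum.inl _ => False
    | Sum.inr i, Sum.inr j =>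
        i = 0 ∧ j = 1 ∨ i = 1 ∧ j = 2 ∨ i = 0 ∧ j = 3 ∨ i = 3 ∧ j = 4

/-- `G_β`: add vertices `u, a₁, a₂` (coded as `0,1,2`), with `u` adjacent to all of `G`
and to `a₁`; `a₁ ~ a₂`. -/
def Gbeta {V : Type*} (G : SimpleGraph V) : SimpleGraph (V ⊕ Fin 3) :=
  SimpleGraph.fromRel fun x y =>
    match x, y with
    | Sum.inl a, Sum.inl b => G.Adj a b
    | Sum.inl _, Sum.inr i => i = 0
    | Sum.inr _, Sum.inl _ => False
    | Sum.inr i, Sum.inr j => i = 0 ∧ j = 1 ∨ i = 1 ∧ j = 2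

/-- `G_γ`: add vertices `u, v, a₁, a₂, b₁, b₂` (coded as `0,1,2,3,4,5`), with `u ~ v`, both
adjacent to all of `G`; `u ~ a₁`, `a₁ ~ a₂`, `v ~ b₁`, `b₁ ~ b₂`. -/
def Ggamma {V : Type*} (G : SimpleGraph V) : SimpleGraph (V ⊕ Fin 6) :=
  SimpleGraph.fromRel fun x y =>
    match x, y with
    | Sum.inl a, Sum.inl b => G.Adj a b
    | Sum.inl _, Sum.inr i => i = 0 ∨ i = 1
    | Sum.inr _, Sum.inl _ => False
    | Sum.inr i, Sum.inr j =>
        i = 0 ∧ j = 1 ∨ i = 0 ∧ j = 2 ∨ i = 2 ∧ j = 3 ∨ i = 1 ∧ j = 4 ∨ i = 4 ∧ j = 5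

/-- The disjoint union of a family of graphs, on the sigma type of their vertex sets. -/
def sigmaGraph {p : ℕ} {V : Fin p → Type*} (G : ∀ i, SimpleGraph (V i)) :
    SimpleGraph (Σ i, V i) :=
  SimpleGraph.fromRel fun x y => ∃ h : x.1 = y.1, (G y.1).Adj (h ▸ x.2) y.2

/-- The graph obtained from `H` by adding one new vertex adjacent to every vertex of `H`. -/
def joinVertex {W : Type*} (H : SimpleGraph W) : SimpleGraph (W ⊕ Unit) :=
  SimpleGraph.fromRel fun x y =>
    match x, y with
    | Sum.inl a, Sum.inl b => H.Adj a b
    | Sum.inl _, Sum.inr _ => True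
    | _, _ => False


/-! ### Auxiliary lemmas -/

section Helpers

lemma icc_inter_nonempty {a b c d : ℝ} (hab : a ≤ b) (hcd : c ≤ d) :
    (Icc a b ∩ Icc c d).Nonempty ↔ a ≤ d ∧ c ≤ b := by
  rw [Icc_inter_Icc, nonempty_Icc]
  constructor
  · intro h
    have h1 := le_trans (le_max_left a c) h
    have h2 := le_trans (le_max_right a c) h
    simp only [le_min_iff] at h1 h2
    exact ⟨h1.2, h2.1⟩
  · intro ⟨h1, h2⟩
    simp only [max_le_iff, le_min_iff]
    exact ⟨⟨hab, h2⟩, ⟨h1, hcd⟩⟩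

lemma icc_ssubset_iff {a b c d : ℝ} (hab : a ≤ b) (hcd : c ≤ d) :
    Icc a b ⊂ Icc c d ↔ (c ≤ a ∧ b ≤ d) ∧ ¬(a ≤ c ∧ d ≤ b) := by
  rw [ssubset_iff_subset_not_subset, Icc_subset_Icc_iff hab, Icc_subset_Icc_iff hcd]

lemma sigma_eta {α : Type*} {β : α → Type*} (s : Σ a, β a) {a : α} (h : s.1 = a) :
    s = ⟨a, h ▸ s.2⟩ := by cases s; subst h; rfl

end Helpers

namespace IntervalRep

variable {V : Type*} {G : SimpleGraph V} (R : IntervalRep G)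

def chainSet : Set ℕ :=
  {k : ℕ | ∃ f : Fin k → V, ∀ i j : Fin k, i < j → R.itv (f i) ⊂ R.itv (f j)}

lemma nesting_def : R.nesting = sSup R.chainSet := rfl

lemma zero_mem_chainSet : 0 ∈ R.chainSet := ⟨Fin.elim0, fun i => i.elim0⟩

lemma itv_nonempty (v : V) : (R.itv v).Nonempty := nonempty_Icc.2 (R.le v)

lemma itv_inter_nonempty (u v : V) :
    (R.itv u ∩ R.itv v).Nonempty ↔ R.l u ≤ R.r v ∧ R.l v ≤ R.r u :=
  icc_inter_nonempty (R.le u) (R.le v)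

lemma itv_ssubset (u v : V) :
    R.itv u ⊂ R.itv v ↔ (R.l v ≤ R.l u ∧ R.r u ≤ R.r v) ∧ ¬(R.l u ≤ R.l v ∧ R.r v ≤ R.r u) :=
  icc_ssubset_iff (R.le u) (R.le v)

lemma adj_itv (u v : V) (h : u ≠ v) :
    G.Adj u v ↔ (R.itv u ∩ R.itv v).Nonempty := R.adj_iff u v h

lemma disjoint_itv {u v : V} (h : u ≠ v) (hna : ¬ G.Adj u v) (x : ℝ)
    (hu : x ∈ R.itv u) : x ∉ R.itv v := by
  intro hv
  exact hna ((R.adj_iff u v h).2 ⟨x, hu, hv⟩)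

lemma chain_mem_le_card [Fintype V] {k : ℕ} (h : k ∈ R.chainSet) :
    k ≤ Fintype.card V := by
  obtain ⟨f, hf⟩ := h
  have hinj : Function.Injective f := by
    intro i j hij
    by_contra hne
    rcases lt_or_gt_of_ne (fun h => hne (by exact h : i = j)) with h | h
    · exact (hf i j h).ne (by rw [hij])
    · exact (hf j i h).ne (by rw [hij])
  simpa using Fintype.card_le_of_injective f hinj

lemma bddAbove_chainSet [Fintype V] : BddAbove R.chainSet :=
  ⟨Fintype.card V, fun _ h => R.chain_mem_le_card h⟩

lemma le_nesting [Fintype V] {k : ℕ} (h : k ∈ R.chainSet) : k ≤ R.nesting :=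
  le_csSup R.bddAbove_chainSet h

lemma nesting_le {n : ℕ} (h : ∀ k ∈ R.chainSet, k ≤ n) : R.nesting ≤ n :=
  csSup_le ⟨0, R.zero_mem_chainSet⟩ h

lemma nesting_mem [Fintype V] : R.nesting ∈ R.chainSet :=
  Nat.sSup_mem ⟨0, R.zero_mem_chainSet⟩ R.bddAbove_chainSet

def flip : IntervalRep G where
  l v := -R.r v
  r v := -R.l v
  le v := by have := R.le v; show -R.r v ≤ -R.l v; linarith
  adj_iff u v h := by
    rw [R.adj_iff u v h]
    rw [icc_inter_nonempty (R.le u) (R.le v),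
      icc_inter_nonempty (by have := R.le u; linarith : -R.r u ≤ -R.l u)
        (by have := R.le v; linarith : -R.r v ≤ -R.l v)]
    constructor <;> intro ⟨h1, h2⟩ <;> constructor <;> linarith

lemma flip_itv_ssubset (u v : V) :
    R.flip.itv u ⊂ R.flip.itv v ↔ R.itv u ⊂ R.itv v := by
  show Icc (-R.r u) (-R.l u) ⊂ Icc (-R.r v) (-R.l v) ↔ _
  unfold itv
  rw [show Icc (-R.r u) (-R.l u) = -Icc (R.l u) (R.r u) by rw [neg_Icc],
    show Icc (-R.r v) (-R.l v) = -Icc (R.l v) (R.r v) by rw [neg_Icc]]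
  rw [ssubset_iff_subset_not_subset, ssubset_iff_subset_not_subset,
    Set.neg_subset_neg, Set.neg_subset_neg]

lemma flip_nesting : R.flip.nesting = R.nesting := by
  unfold nesting
  congr 1
  ext k
  simp only [mem_setOf_eq]
  constructor <;> intro ⟨f, hf⟩ <;> exact ⟨f, fun i j hij => by
    have := hf i j hij
    first
      | exact (R.flip_itv_ssubset _ _).1 this
      | exact (R.flip_itv_ssubset _ _).2 this⟩

def affine (c s : ℝ) (hs : 0 < s) : IntervalRep G where
  l v := c + s * R.l v
  r v := c + s * R.r v
  le v := by have := R.le v; show c + s * R.l v ≤ c + s * R.r v; nlinarith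
  adj_iff u v h := by
    rw [R.adj_iff u v h]
    rw [icc_inter_nonempty (R.le u) (R.le v),
      icc_inter_nonempty (by have := R.le u; nlinarith : c + s * R.l u ≤ c + s * R.r u)
        (by have := R.le v; nlinarith : c + s * R.l v ≤ c + s * R.r v)]
    constructor <;> intro ⟨h1, h2⟩ <;> constructor <;> nlinarith

lemma affine_itv_ssubset (c s : ℝ) (hs : 0 < s) (u v : V) :
    (R.affine c s hs).itv u ⊂ (R.affine c s hs).itv v ↔ R.itv u ⊂ R.itv v := by
  have key : ∀ a b : V,
      (R.affine c s hs).itv a ⊆ (R.affine c s hs).itv b ↔ R.itv a ⊆ R.itv b := by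
    intro a b
    show Icc (c + s * R.l a) (c + s * R.r a) ⊆ Icc (c + s * R.l b) (c + s * R.r b) ↔ _
    unfold itv
    rw [Icc_subset_Icc_iff (by have := R.le a; nlinarith), Icc_subset_Icc_iff (R.le a)]
    constructor <;> intro ⟨h1, h2⟩ <;> constructor <;> nlinarith
  rw [ssubset_iff_subset_not_subset, ssubset_iff_subset_not_subset, key, key]

end IntervalRep

lemma nu_le_nesting {V : Type*} {G : SimpleGraph V} (R : IntervalRep G) :
    nu G ≤ R.nesting := Nat.sInf_le ⟨R, rfl⟩

lemma exists_rep_nu {V : Type*} {G : SimpleGraph V} (h : IsIntervalGraph G) :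
    ∃ R : IntervalRep G, R.nesting = nu G := by
  have hne : {n : ℕ | ∃ R : IntervalRep G, R.nesting = n}.Nonempty := by
    obtain ⟨R⟩ := h; exact ⟨R.nesting, R, rfl⟩
  exact Nat.sInf_mem hne

/-! ### Adjacency in `Ggamma` and `sigmaGraph` -/

lemma ggamma_adj_inl_inl {V : Type*} (G : SimpleGraph V) (a b : V) :
    (Ggamma G).Adj (Sum.inl a) (Sum.inl b) ↔ G.Adj a b := by
  simp only [Ggamma, SimpleGraph.fromRel_adj, ne_eq, Sum.inl.injEq]
  constructor
  · rintro ⟨h, h1 | h1⟩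
    · exact h1
    · exact h1.symm
  · intro h
    exact ⟨G.ne_of_adj h, Or.inl h⟩

lemma ggamma_adj_inl_inr {V : Type*} (G : SimpleGraph V) (a : V) (i : Fin 6) :
    (Ggamma G).Adj (Sum.inl a) (Sum.inr i) ↔ i = 0 ∨ i = 1 := by
  simp [Ggamma, SimpleGraph.fromRel_adj]

lemma ggamma_adj_inr_inr {V : Type*} (G : SimpleGraph V) (i j : Fin 6) :
    (Ggamma G).Adj (Sum.inr i) (Sum.inr j) ↔
      (i = 0 ∧ j = 1 ∨ i = 0 ∧ j = 2 ∨ i = 2 ∧ j = 3 ∨ i = 1 ∧ j = 4 ∨ i = 4 ∧ j = 5) ∨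
      (j = 0 ∧ i = 1 ∨ j = 0 ∧ i = 2 ∨ j = 2 ∧ i = 3 ∨ j = 1 ∧ i = 4 ∨ j = 4 ∧ i = 5) := by
  simp only [Ggamma, SimpleGraph.fromRel_adj, ne_eq, Sum.inr.injEq]
  constructor
  · rintro ⟨h, h1⟩; exact h1
  · intro h
    refine ⟨?_, h⟩
    rintro rfl
    fin_cases i <;> simp_all

lemma sigma_adj_same {p : ℕ} {V : Fin p → Type*} (G : ∀ i, SimpleGraph (V i))
    (i : Fin p) (x y : V i) :
    (sigmaGraph G).Adj ⟨i, x⟩ ⟨i, y⟩ ↔ (G i).Adj x y := by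
  simp only [sigmaGraph, SimpleGraph.fromRel_adj, ne_eq, Sigma.mk.inj_iff, heq_eq_eq]
  constructor
  · rintro ⟨h, ⟨h', ha⟩ | ⟨h', ha⟩⟩
    · exact ha
    · exact ha.symm
  · intro h
    exact ⟨fun hc => (G i).ne_of_adj h hc.2, Or.inl ⟨trivial, h⟩⟩

lemma sigma_not_adj {p : ℕ} {V : Fin p → Type*} (G : ∀ i, SimpleGraph (V i))
    {i j : Fin p} (hij : i ≠ j) (x : V i) (y : V j) :
    ¬ (sigmaGraph G).Adj ⟨i, x⟩ ⟨j, y⟩ := by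
  simp only [sigmaGraph, SimpleGraph.fromRel_adj, ne_eq, not_and, not_or]
  intro h
  constructor <;> rintro ⟨h', -⟩
  · exact hij (by simpa using h')
  · exact hij (by simpa using h'.symm)

/-! ### The construction of a good representation of `Ggamma (sigmaGraph G)` -/

section Construction

variable {p : ℕ} {V : Fin p → Type*} [∀ i, Fintype (V i)] [∀ i, Nonempty (V i)]
  (G : ∀ i, SimpleGraph (V i)) (Q : ∀ i, IntervalRep (G i))

noncomputable def mlo (i : Fin p) : ℝ := Finset.univ.inf' Finset.univ_nonempty (Q i).l
noncomputable def mhi (i : Fin p) : ℝ := Finset.univ.sup' Finset.univ_nonempty (Q i).r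

lemma mlo_le (i : Fin p) (x : V i) : mlo G Q i ≤ (Q i).l x :=
  Finset.inf'_le _ (Finset.mem_univ x)

lemma le_mhi (i : Fin p) (x : V i) : (Q i).r x ≤ mhi G Q i :=
  Finset.le_sup' _ (Finset.mem_univ x)

lemma mlo_le_mhi (i : Fin p) : mlo G Q i ≤ mhi G Q i := by
  obtain ⟨x⟩ := (inferInstance : Nonempty (V i))
  exact le_trans (mlo_le G Q i x) (le_trans ((Q i).le x) (le_mhi G Q i x))

noncomputable def sc (i : Fin p) : ℝ := (2 * (mhi G Q i - mlo G Q i + 1))⁻¹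

lemma sc_pos (i : Fin p) : 0 < sc G Q i := by
  have := mlo_le_mhi G Q i
  rw [sc]
  apply inv_pos.2
  linarith

noncomputable def NQ (i : Fin p) : IntervalRep (G i) :=
  (Q i).affine (((i : ℕ) : ℝ) + 4⁻¹ - sc G Q i * mlo G Q i) (sc G Q i) (sc_pos G Q i)

lemma sc_mul_le (i : Fin p) : sc G Q i * (mhi G Q i - mlo G Q i) ≤ 2⁻¹ := by
  have hd : 0 ≤ mhi G Q i - mlo G Q i := by have := mlo_le_mhi G Q i; linarith
  have hne : 2 * (mhi G Q i - mlo G Q i + 1) ≠ 0 := by positivity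
  have h1 : sc G Q i * (2 * (mhi G Q i - mlo G Q i + 1)) = 1 := inv_mul_cancel₀ hne
  have h2 := sc_pos G Q i
  nlinarith

lemma NQ_l_bound (i : Fin p) (x : V i) : ((i : ℕ) : ℝ) + 4⁻¹ ≤ (NQ G Q i).l x := by
  show ((i : ℕ) : ℝ) + 4⁻¹ ≤ ((i : ℕ) : ℝ) + 4⁻¹ - sc G Q i * mlo G Q i + sc G Q i * (Q i).l x
  have h1 := mlo_le G Q i x
  have h2 := sc_pos G Q i
  nlinarith

lemma NQ_r_bound (i : Fin p) (x : V i) : (NQ G Q i).r x ≤ ((i : ℕ) : ℝ) + 3 / 4 := by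
  show ((i : ℕ) : ℝ) + 4⁻¹ - sc G Q i * mlo G Q i + sc G Q i * (Q i).r x ≤ _
  have h1 := le_mhi G Q i x
  have h2 := sc_pos G Q i
  have h3 := sc_mul_le G Q i
  nlinarith

/-- Endpoints of the six special intervals: `u, v, a₁, a₂, b₁, b₂`. -/
noncomputable def lf (pp : ℝ) : Fin 6 → ℝ := fun j =>
  if j = 0 then -2 else if j = 1 then 0 else if j = 2 then -3 else if j = 3 then -4
  else if j = 4 then pp + 2 else pp + 3
noncomputable def rf (pp : ℝ) : Fin 6 → ℝ := fun j =>
  if j = 0 then pp else if j = 1 then pp + 2 else if j = 2 then -2 else if j = 3 then -3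
  else if j = 4 then pp + 3 else pp + 4

lemma lf_le_rf {pp : ℝ} (hpp : 2 ≤ pp) (j : Fin 6) : lf pp j ≤ rf pp j := by
  fin_cases j <;> simp [lf, rf] <;> linarith

noncomputable def bigRep (hp : 2 ≤ p) : IntervalRep (Ggamma (sigmaGraph G)) where
  l w := Sum.elim (fun z => (NQ G Q z.1).l z.2) (lf (p : ℝ)) w
  r w := Sum.elim (fun z => (NQ G Q z.1).r z.2) (rf (p : ℝ)) w
  le w := by
    rcases w with z | j
    · exact (NQ G Q z.1).le z.2
    · exact lf_le_rf (by exact_mod_cast hp) j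
  adj_iff u v huv := by
    have hpp : (2 : ℝ) ≤ (p : ℝ) := by exact_mod_cast hp
    have hlef : ∀ j : Fin 6, lf (p : ℝ) j ≤ rf (p : ℝ) j := lf_le_rf hpp
    have hcast : ∀ i : Fin p, ((i : ℕ) : ℝ) + 1 ≤ (p : ℝ) := by
      intro i
      exact_mod_cast Nat.succ_le_of_lt i.2
    have hcast0 : ∀ i : Fin p, (0 : ℝ) ≤ ((i : ℕ) : ℝ) := fun i => Nat.cast_nonneg _
    have hmain : ∀ (z : Σ i, V i) (j : Fin 6),
        (Ggamma (sigmaGraph G)).Adj (Sum.inl z) (Sum.inr j) ↔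
          (Icc ((NQ G Q z.1).l z.2) ((NQ G Q z.1).r z.2) ∩
            Icc (lf (p : ℝ) j) (rf (p : ℝ) j)).Nonempty := by
      intro z j
      have h1 := NQ_l_bound G Q z.1 z.2
      have h2 := NQ_r_bound G Q z.1 z.2
      have h0 := hcast0 z.1
      have hip := hcast z.1
      have h3 := (NQ G Q z.1).le z.2
      rw [ggamma_adj_inl_inr, icc_inter_nonempty ((NQ G Q z.1).le z.2) (hlef j)]
      fin_cases j <;> simp [lf, rf] <;>
        first
          | (constructor <;> linarith)
          | (rintro ⟨hA, hB⟩ <;> linarith)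
          | (intro hA hB; linarith)
          | (intro hA; linarith)
    rcases u with z | i <;> rcases v with w | j
    · obtain ⟨i, x⟩ := z
      obtain ⟨j, y⟩ := w
      show _ ↔ (Icc ((NQ G Q i).l x) ((NQ G Q i).r x) ∩
        Icc ((NQ G Q j).l y) ((NQ G Q j).r y)).Nonempty
      rw [ggamma_adj_inl_inl]
      by_cases hij : i = j
      · subst hij
        have hxy : x ≠ y := by
          intro h; exact huv (by rw [h])
        rw [sigma_adj_same]
        exact (NQ G Q i).adj_iff x y hxy
      · rw [iff_false_intro (sigma_not_adj G hij x y), false_iff]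
        rw [icc_inter_nonempty ((NQ G Q i).le x) ((NQ G Q j).le y)]
        rintro ⟨hA, hB⟩
        have b1 := NQ_l_bound G Q i x
        have b2 := NQ_r_bound G Q i x
        have b3 := NQ_l_bound G Q j y
        have b4 := NQ_r_bound G Q j y
        rcases lt_or_gt_of_ne (fun h : (i : ℕ) = (j : ℕ) => hij (Fin.ext h)) with h | h
        · have : ((i : ℕ) : ℝ) + 1 ≤ ((j : ℕ) : ℝ) := by exact_mod_cast h
          linarith
        · have : ((j : ℕ) : ℝ) + 1 ≤ ((i : ℕ) : ℝ) := by exact_mod_cast h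
          linarith
    · exact hmain z j
    · have hthis := hmain w i
      rw [SimpleGraph.adj_comm, Set.inter_comm] at hthis
      exact hthis
    · have hij : i ≠ j := by
        intro h; exact huv (by rw [h])
      show _ ↔ (Icc (lf (p : ℝ) i) (rf (p : ℝ) i) ∩ Icc (lf (p : ℝ) j) (rf (p : ℝ) j)).Nonempty
      rw [ggamma_adj_inr_inr, icc_inter_nonempty (hlef i) (hlef j)]
      clear hmain hlef hcast hcast0 huv
      fin_cases i <;> fin_cases j <;>
        first
          | (exact absurd rfl hij)
          | (clear hij
             simp [lf, rf] <;>
               first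
                 | (constructor <;> linarith)
                 | (rintro ⟨hA, hB⟩ <;> linarith)
                 | (intro hA hB; linarith)
                 | (intro hA; linarith)
                 | linarith)

lemma bigRep_l_inl (hp : 2 ≤ p) (z : Σ i, V i) :
    (bigRep G Q hp).l (Sum.inl z) = (NQ G Q z.1).l z.2 := rfl
lemma bigRep_r_inl (hp : 2 ≤ p) (z : Σ i, V i) :
    (bigRep G Q hp).r (Sum.inl z) = (NQ G Q z.1).r z.2 := rfl
lemma bigRep_l_inr (hp : 2 ≤ p) (j : Fin 6) :
    (bigRep G Q hp).l (Sum.inr j) = lf (p : ℝ) j := rfl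
lemma bigRep_r_inr (hp : 2 ≤ p) (j : Fin 6) :
    (bigRep G Q hp).r (Sum.inr j) = rf (p : ℝ) j := rfl

lemma bigRep_not_inr_ssubset (hp : 2 ≤ p) (j : Fin 6) (w : (Σ i, V i) ⊕ Fin 6) :
    ¬ ((bigRep G Q hp).itv (Sum.inr j) ⊂ (bigRep G Q hp).itv w) := by
  have hpp : (2 : ℝ) ≤ (p : ℝ) := by exact_mod_cast hp
  intro hss
  rw [(bigRep G Q hp).itv_ssubset] at hss
  obtain ⟨⟨h1, h2⟩, h3⟩ := hss
  rcases w with z | j'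
  · rw [bigRep_l_inl, bigRep_l_inr] at h1
    rw [bigRep_r_inl, bigRep_r_inr] at h2
    have b1 := NQ_l_bound G Q z.1 z.2
    have b2 := NQ_r_bound G Q z.1 z.2
    have b3 : ((z.1 : ℕ) : ℝ) + 1 ≤ (p : ℝ) := by exact_mod_cast Nat.succ_le_of_lt z.1.2
    have b0 : (0 : ℝ) ≤ ((z.1 : ℕ) : ℝ) := Nat.cast_nonneg _
    fin_cases j <;> simp [lf, rf] at h1 h2 <;> linarith
  · rw [bigRep_l_inr, bigRep_l_inr] at h1
    rw [bigRep_r_inr, bigRep_r_inr] at h2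
    rw [bigRep_l_inr, bigRep_l_inr, bigRep_r_inr, bigRep_r_inr] at h3
    fin_cases j <;> fin_cases j' <;>
      simp [lf, rf] at h1 h2 h3 <;> linarith

lemma bigRep_nesting_le (hp : 2 ≤ p) :
    (bigRep G Q hp).nesting ≤ (Finset.univ.sup fun i => (Q i).nesting) + 1 := by
  apply IntervalRep.nesting_le
  rintro k ⟨f, hf⟩
  by_contra hgt
  push_neg at hgt
  have hk2 : 2 ≤ k := by omega
  have hinl : ∀ i : Fin k, (i : ℕ) < k - 1 → ∃ z, f i = Sum.inl z := by
    intro i hi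
    rcases hfi : f i with z | j
    · exact ⟨z, rfl⟩
    · exfalso
      have hlt : i < (⟨k - 1, by omega⟩ : Fin k) := by
        rw [Fin.lt_def]; exact hi
      have hss := hf i _ hlt
      rw [hfi] at hss
      exact bigRep_not_inr_ssubset G Q hp j _ hss
  choose z hz using hinl
  have hk0 : 0 < k := by omega
  have h0lt : ((⟨0, hk0⟩ : Fin k) : ℕ) < k - 1 := by
    simp only [Fin.val_mk]; omega
  set a := z ⟨0, hk0⟩ h0lt with ha
  have hcomp : ∀ (i : Fin k) (hi : (i : ℕ) < k - 1), (z i hi).1 = a.1 := by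
    intro i hi
    by_cases h0 : (i : ℕ) = 0
    · have hieq : i = (⟨0, hk0⟩ : Fin k) := Fin.ext h0
      subst hieq
      rfl
    · have hlt : (⟨0, hk0⟩ : Fin k) < i := by
        simp only [Fin.lt_def, Fin.val_mk]; omega
      have hss := hf _ i hlt
      rw [hz _ h0lt, hz i hi] at hss
      set b := z i hi with hb
      rw [(bigRep G Q hp).itv_ssubset] at hss
      obtain ⟨⟨h1, h2⟩, -⟩ := hss
      rw [bigRep_l_inl, bigRep_l_inl] at h1
      rw [bigRep_r_inl, bigRep_r_inl] at h2
      by_contra hne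
      have c1 := NQ_l_bound G Q a.1 a.2
      have c2 := NQ_r_bound G Q a.1 a.2
      have c3 := NQ_l_bound G Q b.1 b.2
      have c4 := NQ_r_bound G Q b.1 b.2
      have c5 := (NQ G Q a.1).le a.2
      rcases lt_or_gt_of_ne (fun h : (b.1 : ℕ) = (a.1 : ℕ) => hne (Fin.ext h)) with h | h
      · have : ((b.1 : ℕ) : ℝ) + 1 ≤ ((a.1 : ℕ) : ℝ) := by exact_mod_cast h
        linarith
      · have : ((a.1 : ℕ) : ℝ) + 1 ≤ ((b.1 : ℕ) : ℝ) := by exact_mod_cast h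
        linarith
  have hsub : k - 1 ≤ k := Nat.sub_le k 1
  have hPlt : ∀ i : Fin (k - 1), (i : ℕ) < k := fun i => lt_of_lt_of_le i.2 hsub
  have hP : ∀ i : Fin (k - 1), ((⟨(i : ℕ), hPlt i⟩ : Fin k) : ℕ) < k - 1 := fun i => i.2
  have hmem : (k - 1) ∈ (Q a.1).chainSet := by
    refine ⟨fun i => (hcomp ⟨(i : ℕ), hPlt i⟩ (hP i)) ▸ (z ⟨(i : ℕ), hPlt i⟩ (hP i)).2, ?_⟩
    intro i j hij
    apply ((Q a.1).affine_itv_ssubset _ _ (sc_pos G Q a.1) _ _).1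
    show (NQ G Q a.1).itv _ ⊂ (NQ G Q a.1).itv _
    have hlt : (⟨(i : ℕ), hPlt i⟩ : Fin k) < (⟨(j : ℕ), hPlt j⟩ : Fin k) := by
      simp only [Fin.lt_def, Fin.val_mk]
      exact hij
    have hss := hf _ _ hlt
    rw [hz _ (hP i), hz _ (hP j)] at hss
    have ei := sigma_eta (z ⟨(i : ℕ), hPlt i⟩ (hP i)) (hcomp ⟨(i : ℕ), hPlt i⟩ (hP i))
    have ej := sigma_eta (z ⟨(j : ℕ), hPlt j⟩ (hP j)) (hcomp ⟨(j : ℕ), hPlt j⟩ (hP j))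
    rw [ei, ej] at hss
    exact hss
  have := (Q a.1).le_nesting hmem
  have hsup : (Q a.1).nesting ≤ Finset.univ.sup fun i => (Q i).nesting :=
    Finset.le_sup (f := fun i => (Q i).nesting) (Finset.mem_univ a.1)
  omega

end Construction


/-! ### The lower bound -/

section LowerBound

variable {p : ℕ} {V : Fin p → Type*} [∀ i, Fintype (V i)] [∀ i, Nonempty (V i)]
  (G : ∀ i, SimpleGraph (V i))

/-- Restriction of a representation of `Ggamma (sigmaGraph G)` to the component `i`. -/
def restrictRep (R : IntervalRep (Ggamma (sigmaGraph G))) (i : Fin p) :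
    IntervalRep (G i) where
  l x := R.l (Sum.inl ⟨i, x⟩)
  r x := R.r (Sum.inl ⟨i, x⟩)
  le x := R.le _
  adj_iff x y hxy := by
    have hne : (Sum.inl ⟨i, x⟩ : (Σ i, V i) ⊕ Fin 6) ≠ Sum.inl ⟨i, y⟩ := by
      intro h
      simp only [Sum.inl.injEq, Sigma.mk.inj_iff, heq_eq_eq] at h
      exact hxy h.2
    rw [show (G i).Adj x y ↔ (Ggamma (sigmaGraph G)).Adj (Sum.inl ⟨i, x⟩) (Sum.inl ⟨i, y⟩) from
      ((ggamma_adj_inl_inl (sigmaGraph G) _ _).trans (sigma_adj_same G i x y)).symm]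
    exact R.adj_iff _ _ hne

lemma lower_aux (hp : 2 ≤ p) (R : IntervalRep (Ggamma (sigmaGraph G))) (α : ℝ)
    (hα2 : α ∈ R.itv (Sum.inr 2)) (hα0 : α ∈ R.itv (Sum.inr 0))
    (hαv : α < R.l (Sum.inr 1)) :
    (Finset.univ.sup fun i => nu (G i)) + 1 ≤ R.nesting := by
  -- u ~ v : l v ≤ r u
  have huv := (R.itv_inter_nonempty (Sum.inr 0) (Sum.inr 1)).1
    ((R.adj_itv _ _ (by simp)).1 (by rw [ggamma_adj_inr_inr]; decide))
  -- b₁ ~ v : pick β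
  obtain ⟨β, hβ4, hβ1⟩ := (R.adj_itv (Sum.inr 4) (Sum.inr 1) (by simp)).1
    (by rw [ggamma_adj_inr_inr]; decide)
  -- β ∉ itv u
  have hβu : β ∉ R.itv (Sum.inr 0) :=
    R.disjoint_itv (by simp) (by rw [ggamma_adj_inr_inr]; decide) β hβ4
  rw [IntervalRep.itv, mem_Icc, not_and_or, not_le, not_le] at hβu
  rw [IntervalRep.itv, mem_Icc] at hα0 hα2 hβ4 hβ1
  have hβru : R.r (Sum.inr 0) < β := by
    rcases hβu with h | h
    · linarith
    · exact h
  -- facts about an arbitrary old vertex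
  have hzfacts : ∀ z : Σ i, V i,
      R.l (Sum.inl z) ≤ R.r (Sum.inr 0) ∧ R.l (Sum.inr 0) ≤ R.r (Sum.inl z) ∧
      R.l (Sum.inl z) ≤ R.r (Sum.inr 1) ∧ R.l (Sum.inr 1) ≤ R.r (Sum.inl z) ∧
      α < R.l (Sum.inl z) ∧ R.r (Sum.inl z) < β := by
    intro z
    have h0 := (R.itv_inter_nonempty (Sum.inl z) (Sum.inr 0)).1
      ((R.adj_itv _ _ (by simp)).1 (by rw [ggamma_adj_inl_inr]; left; rfl))
    have h1 := (R.itv_inter_nonempty (Sum.inl z) (Sum.inr 1)).1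
      ((R.adj_itv _ _ (by simp)).1 (by rw [ggamma_adj_inl_inr]; right; rfl))
    have hαz : α ∉ R.itv (Sum.inl z) := by
      refine R.disjoint_itv (u := Sum.inr 2) (v := Sum.inl z) (by simp) ?_ α
        (by rw [IntervalRep.itv, mem_Icc]; exact hα2)
      rw [SimpleGraph.adj_comm, ggamma_adj_inl_inr]
      decide
    have hβz : β ∉ R.itv (Sum.inl z) := by
      refine R.disjoint_itv (u := Sum.inr 4) (v := Sum.inl z) (by simp) ?_ β
        (by rw [IntervalRep.itv, mem_Icc]; exact hβ4)
      rw [SimpleGraph.adj_comm, ggamma_adj_inl_inr]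
      decide
    rw [IntervalRep.itv, mem_Icc, not_and_or, not_le, not_le] at hαz hβz
    refine ⟨h0.1, h0.2, h1.1, h1.2, ?_, ?_⟩
    · rcases hαz with h | h
      · exact h
      · linarith
    · rcases hβz with h | h
      · linarith
      · exact h
  -- every old interval is strictly inside itv u or itv v
  have claim : ∀ z : Σ i, V i,
      R.itv (Sum.inl z) ⊂ R.itv (Sum.inr 0) ∨ R.itv (Sum.inl z) ⊂ R.itv (Sum.inr 1) := by
    intro z
    obtain ⟨f1, f2, f3, f4, f5, f6⟩ := hzfacts z
    by_cases hru : R.r (Sum.inl z) ≤ R.r (Sum.inr 0)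
    · left
      rw [R.itv_ssubset]
      refine ⟨⟨by linarith, hru⟩, ?_⟩
      rintro ⟨hA, -⟩
      linarith
    · by_cases hlv : R.l (Sum.inr 1) ≤ R.l (Sum.inl z)
      · right
        rw [R.itv_ssubset]
        refine ⟨⟨hlv, by linarith⟩, ?_⟩
        rintro ⟨-, hB⟩
        linarith
      · exfalso
        push_neg at hru hlv
        -- pick a vertex in another component
        haveI : Nontrivial (Fin p) :=
          ⟨⟨⟨0, by omega⟩, ⟨1, by omega⟩, by simp [Fin.ext_iff]⟩⟩
        obtain ⟨j, hj⟩ := exists_ne z.1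
        set w : Σ i, V i := ⟨j, Classical.arbitrary (V j)⟩ with hw
        have hwz : (Sum.inl w : (Σ i, V i) ⊕ Fin 6) ≠ Sum.inl z := by
          intro h
          simp only [Sum.inl.injEq] at h
          exact hj (congrArg Sigma.fst h)
        have hna : ¬ (Ggamma (sigmaGraph G)).Adj (Sum.inl w) (Sum.inl z) := by
          rw [ggamma_adj_inl_inl]
          exact sigma_not_adj G hj _ _
        obtain ⟨g1, g2, g3, g4, g5, g6⟩ := hzfacts w
        apply hna
        rw [R.adj_itv _ _ hwz, R.itv_inter_nonempty]
        constructor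
        · linarith
        · linarith
  -- take the component realizing the sup
  have hne : (Finset.univ : Finset (Fin p)).Nonempty := ⟨⟨0, by omega⟩, Finset.mem_univ _⟩
  obtain ⟨i₀, -, hi₀⟩ := Finset.exists_mem_eq_sup Finset.univ hne fun i => nu (G i)
  set R0 := restrictRep G R i₀ with hR0
  have hMN : nu (G i₀) ≤ R0.nesting := nu_le_nesting R0
  rw [hi₀]
  by_cases hN0 : R0.nesting = 0
  · rw [hN0] at hMN
    have h1 : 1 ∈ R.chainSet := by
      refine ⟨fun _ => Sum.inr 0, ?_⟩
      intro i j hij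
      have h1 := Fin.lt_def.1 hij
      have h2 := j.isLt
      omega
    have := R.le_nesting h1
    omega
  · have hN1 : 1 ≤ R0.nesting := by omega
    obtain ⟨g, hg⟩ := R0.nesting_mem
    have hclaim := claim ⟨i₀, g ⟨R0.nesting - 1, by omega⟩⟩
    have key : ∃ c : Fin 6,
        R.itv (Sum.inl ⟨i₀, g ⟨R0.nesting - 1, by omega⟩⟩) ⊂ R.itv (Sum.inr c) := by
      rcases hclaim with h | h
      · exact ⟨0, h⟩
      · exact ⟨1, h⟩
    obtain ⟨c, hc⟩ := key
    have hmem : (R0.nesting + 1) ∈ R.chainSet := by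
      refine ⟨fun i => if h : (i : ℕ) < R0.nesting then Sum.inl ⟨i₀, g ⟨(i : ℕ), h⟩⟩
        else Sum.inr c, ?_⟩
      intro i j hij
      dsimp only
      have hij' := Fin.lt_def.1 hij
      have hi' : (i : ℕ) < R0.nesting := by
        have := j.isLt
        omega
      rw [dif_pos hi']
      by_cases hj' : (j : ℕ) < R0.nesting
      · rw [dif_pos hj']
        exact hg ⟨(i : ℕ), hi'⟩ ⟨(j : ℕ), hj'⟩ (by rw [Fin.lt_def]; exact hij')
      · rw [dif_neg hj']
        by_cases hi1 : (i : ℕ) = R0.nesting - 1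
        · have heq : (⟨(i : ℕ), hi'⟩ : Fin R0.nesting) = ⟨R0.nesting - 1, by omega⟩ :=
            Fin.ext hi1
          rw [heq]
          exact hc
        · refine ssubset_trans ?_ hc
          exact hg ⟨(i : ℕ), hi'⟩ ⟨R0.nesting - 1, by omega⟩
            (by rw [Fin.lt_def]; simp; omega)
    have := R.le_nesting hmem
    omega

lemma lower_bound (hp : 2 ≤ p) (R : IntervalRep (Ggamma (sigmaGraph G))) :
    (Finset.univ.sup fun i => nu (G i)) + 1 ≤ R.nesting := by
  have h20 : (Ggamma (sigmaGraph G)).Adj (Sum.inr 2) (Sum.inr 0) := by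
    rw [ggamma_adj_inr_inr]; decide
  obtain ⟨α, hα2, hα0⟩ := (R.adj_itv _ _ (by simp)).1 h20
  have hαv : α ∉ R.itv (Sum.inr 1) :=
    R.disjoint_itv (by simp) (by rw [ggamma_adj_inr_inr]; decide) α hα2
  rw [IntervalRep.itv, mem_Icc, not_and_or, not_le, not_le] at hαv
  rcases hαv with h | h
  · exact lower_aux G hp R α hα2 hα0 h
  · have hres := lower_aux G hp R.flip (-α) ?_ ?_ ?_
    · rwa [R.flip_nesting] at hres
    · show -α ∈ Icc (-R.r (Sum.inr 2)) (-R.l (Sum.inr 2))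
      rw [IntervalRep.itv, mem_Icc] at hα2
      rw [mem_Icc]
      constructor <;> linarith
    · show -α ∈ Icc (-R.r (Sum.inr 0)) (-R.l (Sum.inr 0))
      rw [IntervalRep.itv, mem_Icc] at hα0
      rw [mem_Icc]
      constructor <;> linarith
    · show -α < -R.r (Sum.inr 1)
      linarith

end LowerBound

/-- for nonempty connected interval graphs `G₁, …, G_p` (`p ≥ 2`) and `G`
their disjoint union, `ν(G_γ) = max{ν(G₁), …, ν(G_p)} + 1`. -/
theorem stmt_15 {p : ℕ} (hp : 2 ≤ p) {V : Fin p → Type*} [∀ i, Fintype (V i)]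
    [∀ i, Nonempty (V i)] (G : ∀ i, SimpleGraph (V i))
    (hconn : ∀ i, (G i).Connected) (hG : ∀ i, IsIntervalGraph (G i)) :
    nu (Ggamma (sigmaGraph G)) = (Finset.univ.sup fun i => nu (G i)) + 1 := by
  classical
  choose Q hQ using fun i => exists_rep_nu (hG i)
  apply le_antisymm
  · calc nu (Ggamma (sigmaGraph G)) ≤ (bigRep G Q hp).nesting := nu_le_nesting _
      _ ≤ (Finset.univ.sup fun i => (Q i).nesting) + 1 := bigRep_nesting_le G Q hp
      _ = (Finset.univ.sup fun i => nu (G i)) + 1 := by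
          congr 1
          exact Finset.sup_congr rfl fun i _ => hQ i
  · unfold nu
    refine le_csInf ⟨(bigRep G Q hp).nesting, bigRep G Q hp, rfl⟩ ?_
    rintro n ⟨R, rfl⟩
    exact lower_bound G hp R
end

section
/- Let G₁, …, G_p (p ≥ 3) be nonempty connected interval graphs and let G be the graph obtained from the disjoint union G₁ ⊔ ⋯ ⊔ G_p by adding one new vertex w adjacent to all of their vertices. Then every interval representation R of G satisfies ν(R) ≥ 1 + min over pairs of distinct indices s ≠ t of max{ν(G_i) : i ∉ {s, t}}. -/
open Set

section Aux

namespace IntervalRep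
variable {V : Type*} {G : SimpleGraph V}

lemma chain_inj (R : IntervalRep G) {k : ℕ} (f : Fin k → V)
    (hf : ∀ i j : Fin k, i < j → R.itv (f i) ⊂ R.itv (f j)) : Function.Injective f := by
  intro i j hij
  rcases lt_trichotomy i j with h | h | h
  · have := hf i j h; rw [hij] at this; exact absurd this (ssubset_irrefl _)
  · exact h
  · have := hf j i h; rw [hij] at this; exact absurd this (ssubset_irrefl _)

lemma chainSet_bddAbove [Fintype V] (R : IntervalRep G) :
    BddAbove {k : ℕ | ∃ f : Fin k → V, ∀ i j : Fin k, i < j → R.itv (f i) ⊂ R.itv (f j)} := by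
  refine ⟨Fintype.card V, fun k hk => ?_⟩
  obtain ⟨f, hf⟩ := hk
  simpa using Fintype.card_le_of_injective f (R.chain_inj f hf)

lemma zero_mem_chainSet_s16 (R : IntervalRep G) :
    0 ∈ {k : ℕ | ∃ f : Fin k → V, ∀ i j : Fin k, i < j → R.itv (f i) ⊂ R.itv (f j)} :=
  ⟨Fin.elim0, fun i => i.elim0⟩

lemma exists_chain_nesting [Fintype V] (R : IntervalRep G) :
    ∃ f : Fin R.nesting → V, ∀ i j : Fin R.nesting, i < j → R.itv (f i) ⊂ R.itv (f j) :=
  Nat.sSup_mem ⟨0, R.zero_mem_chainSet_s16⟩ R.chainSet_bddAbove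

lemma le_nesting_s16 [Fintype V] (R : IntervalRep G) {k : ℕ}
    (hk : ∃ f : Fin k → V, ∀ i j : Fin k, i < j → R.itv (f i) ⊂ R.itv (f j)) :
    k ≤ R.nesting :=
  le_csSup R.chainSet_bddAbove hk

/-- Restriction of a representation along an injective graph embedding. -/
def restrict {V' : Type*} {G' : SimpleGraph V'} (R : IntervalRep G) (φ : V' → V)
    (hinj : Function.Injective φ)
    (hφ : ∀ u v : V', u ≠ v → (G'.Adj u v ↔ G.Adj (φ u) (φ v))) : IntervalRep G' where
  l := fun v => R.l (φ v)
  r := fun v => R.r (φ v)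
  le := fun v => R.le (φ v)
  adj_iff := fun u v huv => by
    rw [hφ u v huv, R.adj_iff (φ u) (φ v) (fun h => huv (hinj h))]

end IntervalRep

end Aux
section GraphAux
variable {p : ℕ} {V : Fin p → Type*} (G : ∀ i, SimpleGraph (V i))

lemma adj_inl_iff {i : Fin p} {u v : V i} (huv : u ≠ v) :
    (joinVertex (sigmaGraph G)).Adj (Sum.inl ⟨i, u⟩) (Sum.inl ⟨i, v⟩) ↔ (G i).Adj u v := by
  simp only [joinVertex, sigmaGraph, SimpleGraph.fromRel_adj]
  constructor
  · rintro ⟨-, h | h⟩ <;> obtain ⟨-, ⟨h1, h2⟩ | ⟨h1, h2⟩⟩ := h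
    · exact h2
    · exact h2.symm
    · exact h2.symm
    · exact h2
  · intro h
    refine ⟨by simp [huv], Or.inl ⟨by simp [huv], Or.inl ⟨trivial, h⟩⟩⟩

lemma not_adj_inl {i j : Fin p} (hij : i ≠ j) (u : V i) (v : V j) :
    ¬ (joinVertex (sigmaGraph G)).Adj (Sum.inl ⟨i, u⟩) (Sum.inl ⟨j, v⟩) := by
  simp only [joinVertex, sigmaGraph, SimpleGraph.fromRel_adj]
  rintro ⟨-, h | h⟩ <;> obtain ⟨-, ⟨h1, h2⟩ | ⟨h1, h2⟩⟩ := h <;>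
    simp_all

lemma adj_w {i : Fin p} (u : V i) :
    (joinVertex (sigmaGraph G)).Adj (Sum.inl ⟨i, u⟩) (Sum.inr ()) := by
  simp only [joinVertex, SimpleGraph.fromRel_adj]
  exact ⟨Sum.inl_ne_inr, Or.inl trivial⟩

end GraphAux
/-- for nonempty connected interval graphs `G₁, …, G_p` (`p ≥ 3`) and `G`
their disjoint union plus a universal vertex `w`, every representation `R` of `G` satisfies
`ν(R) ≥ 1 + min_{s ≠ t} max{ν(G_i) : i ∉ {s,t}}`. -/
theorem stmt_16 {p : ℕ} (hp : 3 ≤ p) {V : Fin p → Type*} [∀ i, Fintype (V i)]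
    [∀ i, Nonempty (V i)] (G : ∀ i, SimpleGraph (V i))
    (hconn : ∀ i, (G i).Connected) (hG : ∀ i, IsIntervalGraph (G i))
    (R : IntervalRep (joinVertex (sigmaGraph G))) :
    1 + sInf {m : ℕ | ∃ s t : Fin p, s ≠ t ∧
        m = (Finset.univ \ {s, t}).sup fun i => nu (G i)} ≤ R.nesting := by
  classical
  set w : (Σ i, V i) ⊕ Unit := Sum.inr () with hw
  set a := R.l w with ha
  set b := R.r w with hb
  have hmeet : ∀ (i : Fin p) (v : V i),
      (R.itv (Sum.inl ⟨i, v⟩) ∩ R.itv w).Nonempty := fun i v =>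
    (R.adj_iff _ _ (by simp [hw])).mp (adj_w G v)
  have hdisj : ∀ (i j : Fin p), i ≠ j → ∀ (u : V i) (v : V j), ∀ x : ℝ,
      x ∈ R.itv (Sum.inl ⟨i, u⟩) → x ∈ R.itv (Sum.inl ⟨j, v⟩) → False := by
    intro i j hij u v x hx hx'
    have hne : (Sum.inl ⟨i, u⟩ : (Σ i, V i) ⊕ Unit) ≠ Sum.inl ⟨j, v⟩ := by
      intro h
      exact hij (congrArg Sigma.fst (Sum.inl.inj h))
    exact not_adj_inl G hij u v ((R.adj_iff _ _ hne).mpr ⟨x, hx, hx'⟩)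
  obtain ⟨s, hs⟩ : ∃ s : Fin p, ∀ i : Fin p,
      (∃ v : V i, a ∈ R.itv (Sum.inl ⟨i, v⟩)) → i = s := by
    by_cases h : ∃ i : Fin p, ∃ v : V i, a ∈ R.itv (Sum.inl ⟨i, v⟩)
    · obtain ⟨s, hsv⟩ := h
      refine ⟨s, fun i hi => ?_⟩
      by_contra hne
      obtain ⟨v, hv⟩ := hi
      obtain ⟨v', hv'⟩ := hsv
      exact hdisj i s hne v v' a hv hv'
    · exact ⟨⟨0, by omega⟩, fun i hi => absurd ⟨i, hi⟩ h⟩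
  obtain ⟨t0, ht0⟩ : ∃ t : Fin p, ∀ i : Fin p,
      (∃ v : V i, b ∈ R.itv (Sum.inl ⟨i, v⟩)) → i = t := by
    by_cases h : ∃ i : Fin p, ∃ v : V i, b ∈ R.itv (Sum.inl ⟨i, v⟩)
    · obtain ⟨t, htv⟩ := h
      refine ⟨t, fun i hi => ?_⟩
      by_contra hne
      obtain ⟨v, hv⟩ := hi
      obtain ⟨v', hv'⟩ := htv
      exact hdisj i t hne v v' b hv hv'
    · exact ⟨⟨0, by omega⟩, fun i hi => absurd ⟨i, hi⟩ h⟩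
  obtain ⟨t, hst, ht⟩ : ∃ t : Fin p, s ≠ t ∧
      ∀ i : Fin p, (∃ v : V i, b ∈ R.itv (Sum.inl ⟨i, v⟩)) → i = t ∨ i = s := by
    by_cases h : t0 = s
    · by_cases h0 : s = ⟨0, by omega⟩
      · exact ⟨⟨1, by omega⟩, by simp [h0, Fin.ext_iff],
          fun i hi => Or.inr ((ht0 i hi).trans h)⟩
      · exact ⟨⟨0, by omega⟩, fun hh => h0 hh,
          fun i hi => Or.inr ((ht0 i hi).trans h)⟩
    · exact ⟨t0, fun hh => h hh.symm, fun i hi => Or.inl (ht0 i hi)⟩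
  -- components other than s, t are strictly nested inside I(w)
  have hstrict : ∀ i : Fin p, i ≠ s → i ≠ t → ∀ v : V i,
      R.itv (Sum.inl ⟨i, v⟩) ⊂ R.itv w := by
    intro i his hit v
    obtain ⟨c, hc1, hc2⟩ := hmeet i v
    have hna : a ∉ R.itv (Sum.inl ⟨i, v⟩) := fun h => his (hs i ⟨v, h⟩)
    have hnb : b ∉ R.itv (Sum.inl ⟨i, v⟩) := fun h =>
      (ht i ⟨v, h⟩).elim (fun h' => hit h') (fun h' => his h')
    simp only [IntervalRep.itv, mem_Icc, not_and, not_le] at hc1 hc2 hna hnb ⊢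
    have hal : a < R.l (Sum.inl ⟨i, v⟩) := by
      by_contra hcon
      push_neg at hcon
      have : a ≤ R.r (Sum.inl ⟨i, v⟩) := le_trans hc2.1 hc1.2
      exact absurd (hna hcon) (not_lt.mpr this)
    have hrb : R.r (Sum.inl ⟨i, v⟩) < b := by
      by_contra hcon
      push_neg at hcon
      have hlb : R.l (Sum.inl ⟨i, v⟩) ≤ b := le_trans hc1.1 hc2.2
      exact absurd (hnb hlb) (not_lt.mpr hcon)
    refine Set.ssubset_iff_subset_ne.mpr ⟨Icc_subset_Icc hal.le hrb.le, fun hEq => ?_⟩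
    have : a ∈ Icc (R.l (Sum.inl ⟨i, v⟩)) (R.r (Sum.inl ⟨i, v⟩)) := by
      rw [hEq]; exact left_mem_Icc.mpr (R.le w)
    exact absurd this (by simp [mem_Icc, not_and, not_le]; intro hla; exact absurd hla (not_le.mpr hal))
  -- the sInf is at most the sup over the complement of {s, t}
  have hSle : sInf {m : ℕ | ∃ s t : Fin p, s ≠ t ∧
      m = (Finset.univ \ {s, t}).sup fun i => nu (G i)} ≤
      (Finset.univ \ {s, t}).sup (fun i => nu (G i)) :=
    Nat.sInf_le ⟨s, t, hst, rfl⟩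
  have hnonempty : (Finset.univ \ {s, t} : Finset (Fin p)).Nonempty := by
    rw [Finset.sdiff_nonempty]
    intro hsub
    have h1 := Finset.card_le_card hsub
    have h2 : ({s, t} : Finset (Fin p)).card ≤ 2 :=
      (Finset.card_insert_le _ _).trans (by simp)
    rw [Finset.card_univ, Fintype.card_fin] at h1
    omega
  obtain ⟨i₀, hi₀mem, hi₀⟩ := Finset.exists_mem_eq_sup _ hnonempty (fun i => nu (G i))
  rw [Finset.mem_sdiff, Finset.mem_insert, Finset.mem_singleton] at hi₀mem
  have hi₀s : i₀ ≠ s := fun h => hi₀mem.2 (Or.inl h)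
  have hi₀t : i₀ ≠ t := fun h => hi₀mem.2 (Or.inr h)
  -- restricted representation of G i₀
  have hφinj : Function.Injective (fun v : V i₀ => (Sum.inl ⟨i₀, v⟩ : (Σ i, V i) ⊕ Unit)) := by
    intro u v h
    simpa using h
  let R' : IntervalRep (G i₀) := R.restrict _ hφinj (fun u v huv => (adj_inl_iff G huv).symm)
  have hnu : nu (G i₀) ≤ R'.nesting := Nat.sInf_le ⟨R', rfl⟩
  have hitv : ∀ v : V i₀, R'.itv v = R.itv (Sum.inl ⟨i₀, v⟩) := fun _ => rfl
  obtain ⟨f, hf⟩ := R'.exists_chain_nesting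
  have hmem : (R'.nesting + 1) ∈ {n : ℕ | ∃ g : Fin n → ((Σ i, V i) ⊕ Unit),
      ∀ i j : Fin n, i < j → R.itv (g i) ⊂ R.itv (g j)} := by
    refine ⟨fun j => if h : (j : ℕ) < R'.nesting then Sum.inl ⟨i₀, f ⟨j, h⟩⟩ else w, ?_⟩
    intro j1 j2 hlt
    have hlt' : (j1 : ℕ) < (j2 : ℕ) := hlt
    by_cases h2 : (j2 : ℕ) < R'.nesting
    · have h1 : (j1 : ℕ) < R'.nesting := lt_trans hlt' h2
      simp only [dif_pos h1, dif_pos h2]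
      have := hf ⟨j1, h1⟩ ⟨j2, h2⟩ hlt'
      rwa [hitv, hitv] at this
    · have h1 : (j1 : ℕ) < R'.nesting := by have := j2.isLt; omega
      simp only [dif_pos h1, dif_neg h2]
      exact hstrict i₀ hi₀s hi₀t (f ⟨j1, h1⟩)
  have hfin : R'.nesting + 1 ≤ R.nesting := R.le_nesting_s16 hmem
  omega
end
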